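/- Let φ be a C^{1,1} function on a neighborhood of 0 in ℂ (≅ ℝ²) with φ(0) = 0 and φ(z) ≥ c|z|² for some c > 0 and all z in that neighborhood. Then it is not the case that Δφ ≤ 0 a.e. near 0; more precisely, limsup_{r→0} (2/(π r²)) ∫_{D(0,r)} log(r/|ζ|) Δφ(ζ) dλ₂(ζ) ≥ c > 0. -/

import Mathlib

open Metric MeasureTheory Filter Set intervalIntegral

set_option maxHeartbeats 1000000

noncomputable section


/-- FTC for a Lipschitz function with a.e. derivative `g`. -/
lemma lipschitzOnWith_ftc {u g : ℝ → ℝ} {a b b' : ℝ} {L : NNReal}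
    (hab : a ≤ b) (hbb' : b < b')
    (hu : LipschitzOnWith L u (Set.Icc a b'))
    (hd : ∀ᵐ s, s ∈ Set.Ioo a b → HasDerivAt u (g s) s) :
    ∫ s in Set.Ioo a b, g s = u b - u a := by
  have ucont : ContinuousOn u (Set.Icc a b') := hu.continuousOn
  set h : ℕ → ℝ := fun n => (b' - b) / (n + 1) with hh
  have hhpos : ∀ n, 0 < h n := fun n => div_pos (by linarith) (by positivity)
  have hhle : ∀ n, h n ≤ b' - b := fun n => by
    rw [hh]
    apply div_le_self (by linarith)
    nlinarith [Nat.cast_nonneg (α := ℝ) n]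
  have hh0 : Tendsto h atTop (nhds 0) := by
    have h1 : Tendsto (fun n : ℕ => 1 / ((n : ℝ) + 1)) atTop (nhds 0) :=
      tendsto_one_div_add_atTop_nhds_zero_nat
    have h2 := h1.const_mul (b' - b)
    rw [mul_zero] at h2
    convert h2 using 2 with n
    simp [hh, div_eq_mul_inv]
  -- the difference quotients
  set q : ℕ → ℝ → ℝ := fun n s => (u (s + h n) - u s) / h n with hq
  have husub : ∀ n, ∀ s ∈ Set.Icc a b, s ∈ Set.Icc a b' ∧ s + h n ∈ Set.Icc a b' := by
    intro n s hs
    have h1 := (hhpos n).le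
    have h2 := hhle n
    exact ⟨⟨hs.1, by linarith [hs.2]⟩, ⟨by linarith [hs.1], by linarith [hs.2]⟩⟩
  have hqbound : ∀ n, ∀ s ∈ Set.Icc a b, |q n s| ≤ (L : ℝ) := by
    intro n s hs
    obtain ⟨h1, h2⟩ := husub n s hs
    have := hu.dist_le_mul _ h2 _ h1
    rw [Real.dist_eq, Real.dist_eq] at this
    rw [hq, abs_div, abs_of_pos (hhpos n), div_le_iff₀ (hhpos n)]
    simpa [abs_of_pos (hhpos n)] using this
  have hucont' : ∀ n, ContinuousOn (fun s => u (s + h n)) (Set.Icc a b) := by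
    intro n
    have hcont : ContinuousOn (fun s : ℝ => s + h n) (Set.Icc a b) :=
      (continuous_id.add continuous_const).continuousOn
    exact ucont.comp hcont (fun s hs => (husub n s hs).2)
  have hqcont : ∀ n, ContinuousOn (q n) (Set.Icc a b) := by
    intro n
    exact (((hucont' n).sub (ucont.mono (fun s hs => (husub n s hs).1))).div_const _)
  -- Step A : convergence of integrals of difference quotients to ∫ g
  have stepA : Tendsto (fun n => ∫ s in Set.Ioo a b, q n s) atTop
      (nhds (∫ s in Set.Ioo a b, g s)) := by
    apply MeasureTheory.tendsto_integral_of_dominated_convergence (fun _ => (L : ℝ))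
    · intro n
      exact ((hqcont n).mono Set.Ioo_subset_Icc_self).aestronglyMeasurable measurableSet_Ioo
    · refine integrableOn_const ?_
      rw [Real.volume_Ioo]
      exact ENNReal.ofReal_ne_top
    · intro n
      filter_upwards [ae_restrict_mem measurableSet_Ioo] with s hs
      simpa using hqbound n s (Set.Ioo_subset_Icc_self hs)
    · filter_upwards [ae_restrict_of_ae hd, ae_restrict_mem measurableSet_Ioo] with s hds hs
      have hder := hds hs
      have hslope := hasDerivAt_iff_tendsto_slope.1 hder
      have htend : Tendsto (fun n => s + h n) atTop (nhdsWithin s {s}ᶜ) := by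
        apply tendsto_nhdsWithin_of_tendsto_nhds_of_eventually_within
        · simpa using tendsto_const_nhds.add hh0
        · filter_upwards with n
          simp only [Set.mem_compl_iff, Set.mem_singleton_iff]
          intro hcon
          have := hhpos n
          have : h n = 0 := by linarith [congrArg (· - s) hcon]
          linarith [hhpos n]
      have hcomp := hslope.comp htend
      convert hcomp using 1
      funext n
      simp only [Function.comp_apply, slope_def_field]
      rw [hq]
      congr 1
      ring
  -- integrability of u on subintervals
  have uint : ∀ x y, x ∈ Set.Icc a b' → y ∈ Set.Icc a b' → IntervalIntegrable u volume x y := by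
    intro x y hx hy
    exact ((ucont.mono (Set.uIcc_subset_Icc hx hy))).intervalIntegrable
  -- Step B : computation of the integral of the difference quotient
  have stepB : ∀ n, ∫ s in Set.Ioo a b, q n s =
      ((∫ s in b..(b + h n), u s) - ∫ s in a..(a + h n), u s) / h n := by
    intro n
    have hma : a ∈ Set.Icc a b' := ⟨le_refl a, by linarith⟩
    have hmb : b ∈ Set.Icc a b' := ⟨hab, hbb'.le⟩
    have hma2 : a + h n ∈ Set.Icc a b' := (husub n a ⟨le_refl a, hab⟩).2
    have hmb2 : b + h n ∈ Set.Icc a b' := (husub n b ⟨hab, le_refl b⟩).2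
    have i1 : IntervalIntegrable u volume a (a + h n) := uint _ _ hma hma2
    have i2 : IntervalIntegrable u volume (a + h n) (b + h n) := uint _ _ hma2 hmb2
    have i3 : IntervalIntegrable u volume a b := uint _ _ hma hmb
    have i4 : IntervalIntegrable u volume b (b + h n) := uint _ _ hmb hmb2
    have iuh : IntervalIntegrable (fun s => u (s + h n)) volume a b := by
      have := (uint (a + h n) (b + h n) hma2 hmb2).comp_add_right (h n)
      simpa using this
    rw [← MeasureTheory.integral_Ioc_eq_integral_Ioo, ← intervalIntegral.integral_of_le hab]
    have e1 : ∫ s in a..b, q n s = ((∫ s in a..b, u (s + h n)) - ∫ s in a..b, u s) / h n := by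
      rw [div_eq_mul_inv, ← intervalIntegral.integral_sub iuh i3,
        ← intervalIntegral.integral_mul_const]
      simp only [hq, div_eq_mul_inv]
    rw [e1, intervalIntegral.integral_comp_add_right]
    congr 1
    have e2 := intervalIntegral.integral_add_adjacent_intervals i1 i2
    have e3 := intervalIntegral.integral_add_adjacent_intervals i3 i4
    linarith
  -- Step C : the RHS of step B converges to u b - u a
  have stepC : Tendsto (fun n => ((∫ s in b..(b + h n), u s) - ∫ s in a..(a + h n), u s) / h n)
      atTop (nhds (u b - u a)) := by
    have key : ∀ x, x ∈ Set.Icc a b → ∀ n,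
        |(∫ s in x..(x + h n), u s) / h n - u x| ≤ (L : ℝ) * h n := by
      intro x hx n
      have hxm := (husub n x hx).1
      have hxm2 := (husub n x hx).2
      have e : (∫ s in x..(x + h n), u s) - u x * h n = ∫ s in x..(x + h n), (u s - u x) := by
        rw [intervalIntegral.integral_sub (uint _ _ hxm hxm2) intervalIntegrable_const]
        simp [mul_comm]
      have hb : ∀ s ∈ Set.uIcc x (x + h n), |u s - u x| ≤ (L : ℝ) * h n := by
        intro s hs
        rw [Set.uIcc_of_le (by linarith [hhpos n])] at hs
        have hsm : s ∈ Set.Icc a b' := ⟨by linarith [hs.1, hxm.1], by linarith [hs.2, hxm2.2]⟩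
        have hd1 := hu.dist_le_mul _ hsm _ hxm
        rw [Real.dist_eq, Real.dist_eq] at hd1
        apply hd1.trans
        have habs : |s - x| ≤ h n := by
          rw [abs_of_nonneg (by linarith [hs.1])]
          linarith [hs.2]
        exact mul_le_mul_of_nonneg_left habs L.coe_nonneg
      have hnorm := intervalIntegral.norm_integral_le_of_norm_le_const (C := (L : ℝ) * h n)
        (f := fun s => u s - u x) (a := x) (b := x + h n) (by
          intro s hs
          rw [Set.uIoc_of_le (by linarith [hhpos n])] at hs
          exact hb s (by rw [Set.uIcc_of_le (by linarith [hhpos n])]; exact ⟨hs.1.le, hs.2⟩))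
      rw [← e] at hnorm
      have hn2 : |(∫ s in x..(x + h n), u s) - u x * h n| ≤ (L : ℝ) * h n * h n := by
        rw [Real.norm_eq_abs, add_sub_cancel_left, abs_of_pos (hhpos n)] at hnorm
        exact hnorm
      have e4 : (∫ s in x..(x + h n), u s) / h n - u x
          = ((∫ s in x..(x + h n), u s) - u x * h n) / h n := by
        rw [sub_div, mul_div_cancel_right₀ _ (hhpos n).ne']
      rw [e4, abs_div, abs_of_pos (hhpos n), div_le_iff₀ (hhpos n)]
      nlinarith [hn2]
    have hsq : ∀ n, |((∫ s in b..(b + h n), u s) - ∫ s in a..(a + h n), u s) / h n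
        - (u b - u a)| ≤ 2 * (L : ℝ) * h n := by
      intro n
      have k1 := key b ⟨hab, le_refl b⟩ n
      have k2 := key a ⟨le_refl a, hab⟩ n
      have e5 : ((∫ s in b..(b + h n), u s) - ∫ s in a..(a + h n), u s) / h n - (u b - u a)
          = ((∫ s in b..(b + h n), u s) / h n - u b)
            - ((∫ s in a..(a + h n), u s) / h n - u a) := by
        rw [sub_div]
        ring
      rw [e5]
      calc _ ≤ |(∫ s in b..(b + h n), u s) / h n - u b| +
          |(∫ s in a..(a + h n), u s) / h n - u a| := abs_sub _ _
        _ ≤ 2 * (L : ℝ) * h n := by linarith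
    rw [Metric.tendsto_atTop]
    intro ε hε
    have htb : Tendsto (fun n => 2 * (L : ℝ) * h n) atTop (nhds 0) := by
      simpa using hh0.const_mul (2 * (L : ℝ))
    rw [Metric.tendsto_atTop] at htb
    obtain ⟨N, hN⟩ := htb ε hε
    refine ⟨N, fun n hn => ?_⟩
    have h1 := hsq n
    have h2 := hN n hn
    rw [Real.dist_eq, sub_zero] at h2
    rw [Real.dist_eq]
    have h3 : 2 * (L : ℝ) * h n < ε := (le_abs_self _).trans_lt h2
    linarith
  have hfinal := stepA
  rw [show (fun n => ∫ s in Set.Ioo a b, q n s) =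
    (fun n => ((∫ s in b..(b + h n), u s) - ∫ s in a..(a + h n), u s) / h n)
    from funext stepB] at hfinal
  exact tendsto_nhds_unique hfinal stepC


lemma ae_fst_prod {α β : Type*} [MeasurableSpace α] [MeasurableSpace β]
    {μ : Measure α} {ν : Measure β} [SigmaFinite ν] {p : α → Prop}
    (h : ∀ᵐ x ∂μ, p x) : ∀ᵐ q ∂μ.prod ν, p q.1 := by
  rw [ae_iff] at h ⊢
  have hsub : {q : α × β | ¬ p q.1} ⊆ (toMeasurable μ {x | ¬ p x}) ×ˢ Set.univ := by
    intro q hq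
    exact ⟨subset_toMeasurable _ _ hq, trivial⟩
  refine le_antisymm ?_ zero_le
  calc μ.prod ν {q : α × β | ¬ p q.1} ≤ μ.prod ν ((toMeasurable μ {x | ¬ p x}) ×ˢ Set.univ) :=
        measure_mono hsub
    _ = μ (toMeasurable μ {x | ¬ p x}) * ν Set.univ := by
        rw [Measure.prod_prod]
    _ = 0 := by rw [measure_toMeasurable, h, zero_mul]

/-- Expansion of a real-linear form on `ℂ`. -/
lemma clm_expand (L : ℂ →L[ℝ] ℝ) (w : ℂ) : L w = w.re * L 1 + w.im * L Complex.I := by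
  have hw : w = w.re • (1:ℂ) + w.im • Complex.I := by
    rw [Complex.real_smul, Complex.real_smul, mul_one, Complex.re_add_im]
  conv_lhs => rw [hw]
  rw [map_add, L.map_smul, L.map_smul]
  simp [smul_eq_mul]

/-- Expansion of a real-bilinear form on `ℂ`. -/
lemma clm2_expand (A : ℂ →L[ℝ] ℂ →L[ℝ] ℝ) (v w : ℂ) :
    A v w = v.re * w.re * A 1 1 + v.re * w.im * A 1 Complex.I
      + v.im * w.re * A Complex.I 1 + v.im * w.im * A Complex.I Complex.I := by
  have hv : v = v.re • (1:ℂ) + v.im • Complex.I := by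
    rw [Complex.real_smul, Complex.real_smul, mul_one, Complex.re_add_im]
  conv_lhs => rw [hv]
  rw [map_add, A.map_smul, A.map_smul]
  simp only [ContinuousLinearMap.add_apply, ContinuousLinearMap.coe_smul',
    Pi.smul_apply, smul_eq_mul]
  rw [clm_expand (A 1) w, clm_expand (A Complex.I) w]
  ring

lemma re_im_exp (θ : ℝ) :
    ((Complex.exp (θ * Complex.I)).re = Real.cos θ)
    ∧ ((Complex.exp (θ * Complex.I)).im = Real.sin θ) :=
  ⟨Complex.exp_ofReal_mul_I_re θ, Complex.exp_ofReal_mul_I_im θ⟩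

/-- The key algebraic splitting of the Laplacian in polar coordinates. -/
lemma polar_split (A : ℂ →L[ℝ] ℂ →L[ℝ] ℝ) (L : ℂ →L[ℝ] ℝ) {s : ℝ} (hs : 0 < s) (θ : ℝ) :
    s * (A 1 1 + A Complex.I Complex.I)
      = (L (Complex.exp (θ * Complex.I))
          + s * (A (Complex.exp (θ * Complex.I)) (Complex.exp (θ * Complex.I))))
        + (1/s) * ((A ((s * Complex.exp (θ * Complex.I)) * Complex.I))
              (Complex.I * (s * Complex.exp (θ * Complex.I)))
            + L (Complex.I * ((s * Complex.exp (θ * Complex.I)) * Complex.I))) := by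
  set E := Complex.exp (θ * Complex.I) with hE
  set x := Real.cos θ
  set y := Real.sin θ
  have hre : E.re = x := (re_im_exp θ).1
  have him : E.im = y := (re_im_exp θ).2
  have h1 : ((s * E) * Complex.I).re = -(s*y) ∧ ((s * E) * Complex.I).im = s*x := by
    constructor <;> simp [Complex.mul_re, Complex.mul_im, hre, him] <;> ring
  have h2 : (Complex.I * ((s * E) * Complex.I)).re = -(s*x)
      ∧ (Complex.I * ((s * E) * Complex.I)).im = -(s*y) := by
    constructor <;> simp [Complex.mul_re, Complex.mul_im, hre, him] <;> ring
  have h3 : (Complex.I * (s * E)).re = -(s*y) ∧ (Complex.I * (s * E)).im = s*x := by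
    constructor <;> simp [Complex.mul_re, Complex.mul_im, hre, him] <;> ring
  have hxy : y^2 + x^2 = 1 := Real.sin_sq_add_cos_sq θ
  have key : s * (s * (A 1 1 + A Complex.I Complex.I))
      = s * (L E + s * (A E E))
        + ((A ((s * E) * Complex.I)) (Complex.I * (s * E))
          + L (Complex.I * ((s * E) * Complex.I))) := by
    rw [clm2_expand A E E, clm2_expand A ((s*E)*Complex.I) (Complex.I * (s*E)),
      clm_expand L E, clm_expand L (Complex.I * ((s*E)*Complex.I))]
    rw [hre, him, h1.1, h1.2, h2.1, h2.2, h3.1, h3.2]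
    linear_combination (-(s^2 * (A 1 1)) - s^2 * (A Complex.I Complex.I)) * hxy
  apply mul_left_cancel₀ hs.ne'
  rw [key]
  field_simp

/-- Radial derivative of `σ ↦ σ • f(σe)(e)`. -/
lemma hasDerivAt_radial (f : ℂ → ℂ →L[ℝ] ℝ) {A : ℂ →L[ℝ] ℂ →L[ℝ] ℝ} {s : ℝ} (θ : ℝ)
    (hA : HasFDerivAt f A ((s : ℂ) * Complex.exp (θ * Complex.I))) :
    HasDerivAt (fun σ : ℝ => σ * (f ((σ : ℂ) * Complex.exp (θ * Complex.I))
        (Complex.exp (θ * Complex.I))))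
      ((f ((s:ℂ) * Complex.exp (θ * Complex.I)) (Complex.exp (θ * Complex.I)))
        + s * (A (Complex.exp (θ * Complex.I)) (Complex.exp (θ * Complex.I)))) s := by
  set E := Complex.exp (θ * Complex.I) with hEdef
  have h1 : HasDerivAt (fun σ : ℝ => (σ:ℂ) * E) E s := by
    have := (hasDerivAt_id s).smul_const E
    simpa [Complex.real_smul] using this
  have h2 : HasDerivAt (fun σ : ℝ => f ((σ:ℂ) * E)) (A E) s :=
    HasFDerivAt.comp_hasDerivAt _ hA h1
  have h3 : HasDerivAt (fun σ : ℝ => (f ((σ:ℂ) * E)) E) ((A E) E) s := by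
    have := h2.clm_apply (hasDerivAt_const s E)
    simpa using this
  have h4 := (hasDerivAt_id s).mul h3
  simpa [Pi.mul_def] using h4

/-- Angular derivative of `θ ↦ f(se^{iθ})(I·se^{iθ})`. -/
lemma hasDerivAt_angular (f : ℂ → ℂ →L[ℝ] ℝ) {A : ℂ →L[ℝ] ℂ →L[ℝ] ℝ} {s θ : ℝ}
    (hA : HasFDerivAt f A ((s:ℂ) * Complex.exp (θ * Complex.I))) :
    HasDerivAt (fun θ' : ℝ => (f ((s:ℂ) * Complex.exp (θ' * Complex.I)))
        (Complex.I * ((s:ℂ) * Complex.exp (θ' * Complex.I))))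
      ((A (((s:ℂ) * Complex.exp (θ * Complex.I)) * Complex.I))
          (Complex.I * ((s:ℂ) * Complex.exp (θ * Complex.I)))
        + (f ((s:ℂ) * Complex.exp (θ * Complex.I)))
            (Complex.I * (((s:ℂ) * Complex.exp (θ * Complex.I)) * Complex.I))) θ := by
  have hc : HasDerivAt (fun θ' : ℝ => (s:ℂ) * Complex.exp (θ' * Complex.I))
      (((s:ℂ) * Complex.exp (θ * Complex.I)) * Complex.I) θ := by
    have h := hasDerivAt_circleMap 0 s θ
    rw [show circleMap 0 s = fun θ' : ℝ => (s:ℂ) * Complex.exp (θ' * Complex.I) from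
      funext fun θ' => by simp [circleMap]] at h
    simpa [circleMap] using h
  have h2 : HasDerivAt (fun θ' : ℝ => f ((s:ℂ) * Complex.exp (θ' * Complex.I)))
      (A (((s:ℂ) * Complex.exp (θ * Complex.I)) * Complex.I)) θ :=
    HasFDerivAt.comp_hasDerivAt _ hA hc
  have hu : HasDerivAt (fun θ' : ℝ => Complex.I * ((s:ℂ) * Complex.exp (θ' * Complex.I)))
      (Complex.I * (((s:ℂ) * Complex.exp (θ * Complex.I)) * Complex.I)) θ :=
    hc.const_mul Complex.I
  exact h2.clm_apply hu


/-- The a.e.-defined Laplacian of a function `φ : ℂ → ℝ` (junk value where the second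
derivative does not exist; for a `C^{1,1}` function it is defined a.e. and bounded). -/
def aeLaplacian (u : ℂ → ℝ) (z : ℂ) : ℝ :=
  fderiv ℝ (fderiv ℝ u) z 1 1 + fderiv ℝ (fderiv ℝ u) z Complex.I Complex.I

lemma integrableOn_of_bound {X : Type*} [MeasureSpace X] {S : Set X} (hS : MeasurableSet S)
    (hfin : volume S < ⊤) {F : X → ℝ} (hm : AEStronglyMeasurable F (volume.restrict S))
    {C : ℝ} (hb : ∀ᵐ x, x ∈ S → |F x| ≤ C) : IntegrableOn F S := by
  apply Integrable.mono' (g := fun _ => C) (integrableOn_const hfin.ne) hm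
  rw [ae_restrict_iff' hS]
  filter_upwards [hb] with x hx hxS
  simpa [Real.norm_eq_abs] using hx hxS

/-- If `φ` is `C^{1,1}` near `0 ∈ ℂ`, `φ(0) = 0` and `φ(z) ≥ c|z|²` with `c > 0` near `0`,
then `Δφ` cannot be `≤ 0` a.e. near `0`; more precisely
`limsup_{r→0⁺} (2/(πr²)) ∫_{D(0,r)} log(r/|ζ|) Δφ(ζ) dλ₂(ζ) ≥ c`. -/
theorem laplacian_limsup_lower_bound
    (V : Set ℂ) (hV : IsOpen V) (h0V : (0:ℂ) ∈ V)
    (φ : ℂ → ℝ) (K : NNReal)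
    (hdiff : DifferentiableOn ℝ φ V)
    (hlip : LipschitzOnWith K (fderiv ℝ φ) V)
    (hφ0 : φ 0 = 0)
    (c : ℝ) (hc : 0 < c)
    (hlb : ∀ z ∈ V, c * ‖z‖ ^ 2 ≤ φ z) :
    (¬ ∀ᵐ z, z ∈ V → aeLaplacian φ z ≤ 0) ∧
    c ≤ Filter.limsup (fun r : ℝ =>
        (2 / (Real.pi * r ^ 2)) *
          ∫ z in ball (0:ℂ) r, Real.log (r / ‖z‖) * aeLaplacian φ z)
      (nhdsWithin 0 (Set.Ioi 0)) := by
  classical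
  set f : ℂ → ℂ →L[ℝ] ℝ := fderiv ℝ φ with hfdef
  obtain ⟨ρ, hρ, hρV⟩ : ∃ ρ > 0, closedBall (0:ℂ) ρ ⊆ V := by
    rcases Metric.nhds_basis_closedBall.mem_iff.1 (hV.mem_nhds h0V) with ⟨ρ, h1, h2⟩
    exact ⟨ρ, h1, h2⟩
  set E : ℝ → ℂ := fun θ => Complex.exp (θ * Complex.I) with hEdef
  set zp : ℝ × ℝ → ℂ := fun p => (p.1 : ℂ) * E p.2 with hzpdef
  set Δ : ℂ → ℝ := aeLaplacian φ with hΔdef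
  have hΔeq : ∀ z, Δ z = fderiv ℝ f z 1 1 + fderiv ℝ f z Complex.I Complex.I := fun z => rfl
  have hEnorm : ∀ θ, ‖E θ‖ = 1 := fun θ => Complex.norm_exp_ofReal_mul_I θ
  have habs : ∀ {t : ℝ} (θ : ℝ), 0 ≤ t → ‖(t:ℂ) * E θ‖ = t := by
    intro t θ ht
    rw [norm_mul, hEnorm, mul_one, Complex.norm_real, Real.norm_eq_abs, abs_of_nonneg ht]
  have hmem : ∀ {t : ℝ} (θ : ℝ), 0 ≤ t → t ≤ ρ → (t:ℂ) * E θ ∈ closedBall (0:ℂ) ρ := by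
    intro t θ ht htρ
    rw [mem_closedBall_zero_iff, habs θ ht]
    exact htρ
  have hmemV : ∀ {t : ℝ} (θ : ℝ), 0 ≤ t → t ≤ ρ → (t:ℂ) * E θ ∈ V :=
    fun θ h1 h2 => hρV (hmem θ h1 h2)
  have hEexp : ∀ θ : ℝ, E θ = (Real.cos θ : ℂ) + (Real.sin θ : ℂ) * Complex.I := by
    intro θ
    apply Complex.ext <;> simp [hEdef, Complex.cos_ofReal_re, Complex.sin_ofReal_re]
  have hsymm : ∀ p : ℝ × ℝ, Complex.polarCoord.symm p = zp p := by
    intro p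
    rw [Complex.polarCoord_symm_apply]
    show _ = (p.1 : ℂ) * E p.2
    rw [hEexp p.2]
  have habs2 : ∀ p : ℝ × ℝ, 0 ≤ p.1 → ‖zp p‖ = p.1 := fun p hp => habs p.2 hp
  -- basic facts about φ and f
  have hder : ∀ z ∈ V, HasFDerivAt φ (f z) z := by
    intro z hz
    exact (hdiff.differentiableAt (hV.mem_nhds hz)).hasFDerivAt
  have hf0 : f 0 = 0 := by
    have hmin : IsLocalMin φ 0 := by
      apply Filter.eventually_of_mem (hV.mem_nhds h0V)
      intro z hz
      rw [hφ0]
      exact le_trans (by positivity) (hlb z hz)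
    exact hmin.fderiv_eq_zero
  have hfb : ∀ z ∈ closedBall (0:ℂ) ρ, ‖f z‖ ≤ K * ‖z‖ := by
    intro z hz
    have := hlip.dist_le_mul z (hρV hz) 0 h0V
    rw [hf0] at this
    simpa [dist_zero_right] using this
  have hev1 : Continuous fun q : (ℂ →L[ℝ] ℝ) × ℂ => q.1 q.2 :=
    isBoundedBilinearMap_apply.continuous
  have hupper : ∀ z ∈ closedBall (0:ℂ) ρ, φ z ≤ K / 2 * ‖z‖^2 := by
    intro z hz
    rw [mem_closedBall_zero_iff] at hz
    have hzcb : ∀ t : ℝ, t ∈ Set.Icc (0:ℝ) 1 → t • z ∈ closedBall (0:ℂ) ρ := by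
      intro t ht
      rw [mem_closedBall_zero_iff, norm_smul, Real.norm_eq_abs, abs_of_nonneg ht.1]
      calc t * ‖z‖ ≤ 1 * ‖z‖ := by nlinarith [norm_nonneg z, ht.2]
        _ = ‖z‖ := one_mul _
        _ ≤ ρ := hz
    have hzV : ∀ t : ℝ, t ∈ Set.Icc (0:ℝ) 1 → t • z ∈ V := fun t ht => hρV (hzcb t ht)
    have hψ : ∀ t ∈ Set.uIcc (0:ℝ) 1, HasDerivAt (fun t : ℝ => φ (t • z)) ((f (t • z)) z) t := by
      intro t ht
      rw [Set.uIcc_of_le zero_le_one] at ht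
      have h1 : HasDerivAt (fun t : ℝ => t • z) z t := by
        simpa using (hasDerivAt_id t).smul_const z
      exact HasFDerivAt.comp_hasDerivAt _ (hder _ (hzV t ht)) h1
    have hcont : ContinuousOn (fun t : ℝ => (f (t • z)) z) (Set.Icc 0 1) := by
      have h2 : ContinuousOn (fun t : ℝ => (f (t • z), z)) (Set.Icc 0 1) := by
        apply ContinuousOn.prodMk _ continuousOn_const
        exact hlip.continuousOn.comp ((continuous_id.smul continuous_const).continuousOn) hzV
      exact hev1.comp_continuousOn h2
    have hInt : IntervalIntegrable (fun t : ℝ => (f (t • z)) z) volume 0 1 := by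
      apply ContinuousOn.intervalIntegrable
      rwa [Set.uIcc_of_le zero_le_one]
    have hftc := intervalIntegral.integral_eq_sub_of_hasDerivAt hψ hInt
    rw [one_smul, zero_smul, hφ0, sub_zero] at hftc
    have hb : (∫ t in (0:ℝ)..1, (f (t • z)) z) ≤ ∫ t in (0:ℝ)..1, ((K : ℝ) * ‖z‖^2) * t := by
      apply intervalIntegral.integral_mono_on zero_le_one hInt
      · exact (continuous_const.mul continuous_id).intervalIntegrable _ _
      · intro t ht
        have h1 : (f (t • z)) z ≤ ‖(f (t • z)) z‖ := le_trans (le_abs_self _) (le_refl _)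
        have h2 : ‖(f (t • z)) z‖ ≤ ‖f (t • z)‖ * ‖z‖ := ContinuousLinearMap.le_opNorm _ _
        have h3 : ‖f (t • z)‖ ≤ (K:ℝ) * (t * ‖z‖) := by
          have h4 := hfb _ (hzcb t ht)
          rwa [norm_smul, Real.norm_eq_abs, abs_of_nonneg ht.1] at h4
        calc (f (t • z)) z ≤ ‖f (t • z)‖ * ‖z‖ := le_trans h1 h2
          _ ≤ ((K:ℝ) * (t * ‖z‖)) * ‖z‖ :=
              mul_le_mul_of_nonneg_right h3 (norm_nonneg z)
          _ = ((K:ℝ) * ‖z‖^2) * t := by ring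
    have hval : (∫ t in (0:ℝ)..1, ((K : ℝ) * ‖z‖^2) * t) = (K:ℝ)/2 * ‖z‖^2 := by
      rw [intervalIntegral.integral_const_mul, integral_id]
      ring
    rw [← hftc]
    rw [hval] at hb
    exact hb
  have hlower : ∀ z ∈ closedBall (0:ℂ) ρ, c * ‖z‖^2 ≤ φ z := fun z hz => hlb z (hρV hz)
  -- measurability
  have hev1 : Continuous fun q : (ℂ →L[ℝ] ℝ) × ℂ => q.1 q.2 :=
    isBoundedBilinearMap_apply.continuous
  have hev2 : Continuous fun q : (ℂ →L[ℝ] (ℂ →L[ℝ] ℝ)) × ℂ => q.1 q.2 :=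
    isBoundedBilinearMap_apply.continuous
  have hfm : Measurable f := measurable_fderiv ℝ φ
  have hAm : Measurable (fderiv ℝ f) := measurable_fderiv ℝ f
  have hAvw : ∀ v w : ℂ, Measurable (fun z => fderiv ℝ f z v w) := by
    intro v w
    have h1 : Measurable fun z => fderiv ℝ f z v :=
      hev2.measurable.comp (hAm.prodMk measurable_const)
    exact hev1.measurable.comp (h1.prodMk measurable_const)
  have hΔm : Measurable Δ := by
    simp only [hΔdef]
    exact ((hAvw 1 1).add (hAvw Complex.I Complex.I))
  have hEc : Continuous E :=
    Complex.continuous_exp.comp ((Complex.continuous_ofReal).mul continuous_const)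
  have hzpc : Continuous zp :=
    (Complex.continuous_ofReal.comp continuous_fst).mul (hEc.comp continuous_snd)
  -- good points
  have hgood : ∀ᵐ z, z ∈ ball (0:ℂ) ρ → (DifferentiableAt ℝ f z ∧ ‖fderiv ℝ f z‖ ≤ K) := by
    filter_upwards [hlip.ae_differentiableWithinAt_of_mem (μ := volume)] with z hz hzb
    have hzV : z ∈ V := hρV (ball_subset_closedBall hzb)
    have hd : DifferentiableAt ℝ f z := (hz hzV).differentiableAt (hV.mem_nhds hzV)
    refine ⟨hd, ?_⟩
    exact hd.hasFDerivAt.le_of_lipschitzOn (hV.mem_nhds hzV) hlip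
  have htransfer : ∀ (P : ℂ → Prop), MeasurableSet {z | P z} →
      (∀ᵐ z, z ∈ ball (0:ℂ) ρ → P z) →
      ∀ᵐ p : ℝ × ℝ, p ∈ Set.Ioo (0:ℝ) ρ ×ˢ Set.Ioo (-Real.pi) Real.pi → P (zp p) := by
    intro P hP hae
    set N : Set ℂ := ball (0:ℂ) ρ \ {z | P z} with hNdef
    have hNm : MeasurableSet N := measurableSet_ball.diff hP
    have hN0 : volume N = 0 := by
      rw [ae_iff] at hae
      refine le_antisymm (le_trans (measure_mono ?_) (le_of_eq hae)) zero_le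
      intro z hz
      simp only [Set.mem_setOf_eq, Classical.not_imp]
      exact ⟨hz.1, hz.2⟩
    have hrectm : MeasurableSet (Set.Ioo (0:ℝ) ρ ×ˢ Set.Ioo (-Real.pi) Real.pi) :=
      measurableSet_Ioo.prod measurableSet_Ioo
    have hTm : MeasurableSet Complex.polarCoord.target := by
      rw [Complex.polarCoord_target]
      exact measurableSet_Ioi.prod measurableSet_Ioo
    have hsub : (Set.Ioo (0:ℝ) ρ ×ˢ Set.Ioo (-Real.pi) Real.pi) ⊆ Complex.polarCoord.target := by
      rw [Complex.polarCoord_target]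
      exact Set.prod_mono Set.Ioo_subset_Ioi_self (le_refl _)
    have hint : (∫ z, N.indicator (fun _ => (1:ℝ)) z) = 0 := by
      rw [MeasureTheory.integral_indicator hNm]
      rw [MeasureTheory.setIntegral_const]
      rw [measureReal_def, hN0]
      simp
    have hsymm_meas : Measurable fun p : ℝ × ℝ => (Complex.polarCoord.symm p : ℂ) := by
      have heq : (fun p : ℝ × ℝ => (Complex.polarCoord.symm p : ℂ)) = zp := funext hsymm
      rw [heq]
      exact hzpc.measurable
    have hpolar := Complex.integral_comp_polarCoord_symm (N.indicator (fun _ => (1:ℝ)))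
    rw [hint] at hpolar
    have hnn : 0 ≤ᵐ[volume.restrict Complex.polarCoord.target]
        fun p : ℝ × ℝ => p.1 • N.indicator (fun _ => (1:ℝ)) (Complex.polarCoord.symm p) := by
      rw [Filter.EventuallyLE]
      rw [ae_restrict_iff' hTm]
      apply Filter.Eventually.of_forall
      intro p hp
      rw [Complex.polarCoord_target] at hp
      have hp1 : 0 < p.1 := hp.1
      simp only [Pi.zero_apply, smul_eq_mul]
      apply mul_nonneg hp1.le
      exact Set.indicator_nonneg (fun _ _ => zero_le_one) _
    have hIg : IntegrableOn
        (fun p : ℝ × ℝ => p.1 • N.indicator (fun _ => (1:ℝ)) (Complex.polarCoord.symm p))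
        Complex.polarCoord.target := by
      have hgint : IntegrableOn
          ((Set.Ioo (0:ℝ) ρ ×ˢ Set.Ioo (-Real.pi) Real.pi).indicator (fun _ => ρ))
          Complex.polarCoord.target := by
        apply MeasureTheory.Integrable.integrableOn
        rw [MeasureTheory.integrable_indicator_iff hrectm]
        apply integrableOn_of_bound hrectm
        · rw [MeasureTheory.Measure.volume_eq_prod, MeasureTheory.Measure.prod_prod,
            Real.volume_Ioo, Real.volume_Ioo]
          exact ENNReal.mul_lt_top ENNReal.ofReal_lt_top ENNReal.ofReal_lt_top
        · exact aestronglyMeasurable_const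
        · exact Filter.Eventually.of_forall (fun x _ => le_abs_self _ |>.trans (le_refl _))
      apply MeasureTheory.Integrable.mono' hgint
      · apply AEStronglyMeasurable.fun_smul
        · exact (measurable_fst.aemeasurable).aestronglyMeasurable
        · apply Measurable.aestronglyMeasurable
          exact (measurable_const.indicator hNm).comp hsymm_meas
      · rw [ae_restrict_iff' hTm]
        apply Filter.Eventually.of_forall
        intro p hp
        rw [Complex.polarCoord_target] at hp
        have hp1 : (0:ℝ) < p.1 := hp.1
        by_cases hmem' : Complex.polarCoord.symm p ∈ N
        · have hlt : p.1 < ρ := by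
            have h5 : ‖Complex.polarCoord.symm p‖ < ρ :=
              mem_ball_zero_iff.1 hmem'.1
            rwa [Complex.norm_polarCoord_symm, abs_of_pos hp1] at h5
          rw [Set.indicator_of_mem hmem']
          rw [Set.indicator_of_mem (by exact ⟨⟨hp1, hlt⟩, hp.2⟩)]
          simp only [smul_eq_mul, mul_one, Real.norm_eq_abs, abs_of_pos hp1]
          exact hlt.le
        · rw [Set.indicator_of_notMem hmem']
          simp only [smul_eq_mul, mul_zero, norm_zero]
          apply Set.indicator_apply_nonneg
          intro _
          exact hρ.le
    have hz0 := (MeasureTheory.integral_eq_zero_iff_of_nonneg_ae hnn hIg).1 hpolar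
    have hz0' := ae_restrict_of_ae_restrict_of_subset hsub hz0
    have hz0'' : ∀ᵐ p : ℝ × ℝ, p ∈ (Set.Ioo (0:ℝ) ρ ×ˢ Set.Ioo (-Real.pi) Real.pi) →
        p.1 • N.indicator (fun _ => (1:ℝ)) (Complex.polarCoord.symm p) = (0:ℝ) := by
      have := (ae_restrict_iff' hrectm).1 hz0'
      filter_upwards [this] with p hp hprect
      simpa using hp hprect
    filter_upwards [hz0''] with p hp hprect
    have hp1 : 0 < p.1 := hprect.1.1
    have hzero := hp hprect
    simp only [smul_eq_mul] at hzero
    have hind : N.indicator (fun _ => (1:ℝ)) (Complex.polarCoord.symm p) = 0 := by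
      rcases mul_eq_zero.1 hzero with h | h
      · exact absurd h hp1.ne'
      · exact h
    have hnotN : Complex.polarCoord.symm p ∉ N := by
      intro hmem'
      rw [Set.indicator_of_mem hmem'] at hind
      exact one_ne_zero hind
    rw [hsymm] at hnotN
    have hball : zp p ∈ ball (0:ℂ) ρ := by
      rw [mem_ball_zero_iff]
      rw [show zp p = (p.1:ℂ) * E p.2 from rfl, habs p.2 hp1.le]
      exact hprect.1.2
    by_contra hcon
    exact hnotN ⟨hball, hcon⟩
  have hpolar_good : ∀ᵐ p : ℝ × ℝ, p ∈ Set.Ioo (0:ℝ) ρ ×ˢ Set.Ioo (-Real.pi) Real.pi →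
      (DifferentiableAt ℝ f (zp p) ∧ ‖fderiv ℝ f (zp p)‖ ≤ K) := by
    apply htransfer (fun z => DifferentiableAt ℝ f z ∧ ‖fderiv ℝ f z‖ ≤ ↑K)
    · rw [Set.setOf_and]
      apply MeasurableSet.inter
      · exact measurableSet_of_differentiableAt ℝ f
      · exact measurableSet_le hAm.norm measurable_const
    · exact hgood
  have hpg' := hpolar_good
  rw [MeasureTheory.Measure.volume_eq_prod ℝ ℝ] at hpg'
  have hslice_s : ∀ᵐ s : ℝ, ∀ᵐ θ : ℝ, ((s, θ) ∈ Set.Ioo (0:ℝ) ρ ×ˢ Set.Ioo (-Real.pi) Real.pi →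
      (DifferentiableAt ℝ f (zp (s, θ)) ∧ ‖fderiv ℝ f (zp (s, θ))‖ ≤ K)) :=
    MeasureTheory.Measure.ae_ae_of_ae_prod hpg'
  have hslice_θ : ∀ᵐ θ : ℝ, ∀ᵐ s : ℝ, ((s, θ) ∈ Set.Ioo (0:ℝ) ρ ×ˢ Set.Ioo (-Real.pi) Real.pi →
      (DifferentiableAt ℝ f (zp (s, θ)) ∧ ‖fderiv ℝ f (zp (s, θ))‖ ≤ K)) := by
    have hswap := (MeasureTheory.Measure.measurePreserving_swap
      (μ := (volume : Measure ℝ)) (ν := (volume : Measure ℝ))).quasiMeasurePreserving.ae hpg'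
    exact MeasureTheory.Measure.ae_ae_of_ae_prod hswap
  -- auxiliary facts for the main identity
  have hΔabs : ∀ z : ℂ, ‖fderiv ℝ f z‖ ≤ (K:ℝ) → |Δ z| ≤ 2*K := by
    intro z hz
    have hb : ∀ v w : ℂ, ‖v‖ = 1 → ‖w‖ = 1 → |fderiv ℝ f z v w| ≤ (K:ℝ) := by
      intro v w hv hw
      have h1 : ‖fderiv ℝ f z v w‖ ≤ ‖fderiv ℝ f z v‖ * ‖w‖ := ContinuousLinearMap.le_opNorm _ _
      have h2 : ‖fderiv ℝ f z v‖ ≤ ‖fderiv ℝ f z‖ * ‖v‖ := ContinuousLinearMap.le_opNorm _ _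
      rw [hw, mul_one] at h1
      rw [hv, mul_one] at h2
      calc |fderiv ℝ f z v w| = ‖fderiv ℝ f z v w‖ := (Real.norm_eq_abs _).symm
        _ ≤ ‖fderiv ℝ f z v‖ := h1
        _ ≤ ‖fderiv ℝ f z‖ := h2
        _ ≤ (K:ℝ) := hz
    have h3 := hb 1 1 (by simp) (by simp)
    have h4 := hb Complex.I Complex.I (by simp) (by simp)
    rw [hΔeq]
    calc |fderiv ℝ f z 1 1 + fderiv ℝ f z Complex.I Complex.I|
        ≤ |fderiv ℝ f z 1 1| + |fderiv ℝ f z Complex.I Complex.I| := abs_add_le _ _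
      _ ≤ 2*K := by linarith
  have hEnorm' : ∀ θ : ℝ, ‖E θ‖ = 1 := fun θ => by
    rw [hEnorm]
  have hznorm : ∀ {t : ℝ} (θ : ℝ), 0 ≤ t → ‖(t:ℂ) * E θ‖ = t := fun θ ht => by
    rw [habs θ ht]
  have hcirc : ∀ (s θ : ℝ), circleMap 0 s θ = (s:ℂ) * E θ := fun s θ => by
    simp [circleMap, hEdef]
  have hEπ : E Real.pi = E (-Real.pi) := by
    rw [hEdef]
    show Complex.exp _ = Complex.exp _
    rw [show ((-Real.pi : ℝ) : ℂ) * Complex.I = -((Real.pi : ℝ) * Complex.I) by push_cast; ring,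
      Complex.exp_neg, Complex.exp_pi_mul_I]
    norm_num
  -- measurability of the polar integrands
  have hEm : Measurable fun p : ℝ × ℝ => E p.2 := (hEc.comp continuous_snd).measurable
  have hfE : Measurable fun p : ℝ × ℝ => (f (zp p)) (E p.2) :=
    hev1.measurable.comp ((hfm.comp hzpc.measurable).prodMk hEm)
  have hAE1 : Measurable fun p : ℝ × ℝ => (fderiv ℝ f (zp p)) (E p.2) :=
    hev2.measurable.comp ((hAm.comp hzpc.measurable).prodMk hEm)
  have hAEE : Measurable fun p : ℝ × ℝ => (fderiv ℝ f (zp p)) (E p.2) (E p.2) :=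
    hev1.measurable.comp (hAE1.prodMk hEm)
  have hDum : Measurable fun p : ℝ × ℝ =>
      (f (zp p)) (E p.2) + p.1 * ((fderiv ℝ f (zp p)) (E p.2) (E p.2)) :=
    hfE.add (measurable_fst.mul hAEE)
  have hA_v1 : Measurable fun p : ℝ × ℝ => (fderiv ℝ f (zp p)) (zp p * Complex.I) :=
    hev2.measurable.comp ((hAm.comp hzpc.measurable).prodMk (hzpc.mul continuous_const).measurable)
  have hDw1 : Measurable fun p : ℝ × ℝ =>
      (fderiv ℝ f (zp p)) (zp p * Complex.I) (Complex.I * zp p) :=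
    hev1.measurable.comp (hA_v1.prodMk (continuous_const.mul hzpc).measurable)
  have hDw2 : Measurable fun p : ℝ × ℝ => (f (zp p)) (Complex.I * (zp p * Complex.I)) :=
    hev1.measurable.comp ((hfm.comp hzpc.measurable).prodMk
      (continuous_const.mul (hzpc.mul continuous_const)).measurable)
  have hDwm : Measurable fun p : ℝ × ℝ =>
      (fderiv ℝ f (zp p)) (zp p * Complex.I) (Complex.I * zp p)
        + (f (zp p)) (Complex.I * (zp p * Complex.I)) := hDw1.add hDw2
  have hΔzp : Measurable fun p : ℝ × ℝ => Δ (zp p) := hΔm.comp hzpc.measurable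
  -- Lipschitz constant for the radial functions
  have hLrad : ∀ θ : ℝ, LipschitzOnWith (2 * K * Real.toNNReal ρ)
      (fun σ : ℝ => σ * (f ((σ:ℂ) * E θ)) (E θ)) (Set.Icc 0 ρ) := by
    intro θ
    rw [lipschitzOnWith_iff_dist_le_mul]
    intro x hx y hy
    have hxcb := hmem θ hx.1 hx.2
    have hycb := hmem θ hy.1 hy.2
    have hgx : |(f ((x:ℂ) * E θ)) (E θ)| ≤ (K:ℝ) * ρ := by
      have h1 : ‖(f ((x:ℂ) * E θ)) (E θ)‖ ≤ ‖f ((x:ℂ) * E θ)‖ * ‖E θ‖ :=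
        ContinuousLinearMap.le_opNorm _ _
      rw [hEnorm', mul_one] at h1
      have h2 := hfb _ hxcb
      rw [hznorm θ hx.1] at h2
      have h3 : (K:ℝ) * x ≤ (K:ℝ) * ρ := mul_le_mul_of_nonneg_left hx.2 K.coe_nonneg
      calc |(f ((x:ℂ) * E θ)) (E θ)| ≤ ‖f ((x:ℂ) * E θ)‖ := h1
        _ ≤ (K:ℝ) * ρ := le_trans h2 h3
    have hgdiff : |(f ((x:ℂ) * E θ)) (E θ) - (f ((y:ℂ) * E θ)) (E θ)| ≤ (K:ℝ) * |x - y| := by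
      have h1 : (f ((x:ℂ) * E θ)) (E θ) - (f ((y:ℂ) * E θ)) (E θ)
          = (f ((x:ℂ) * E θ) - f ((y:ℂ) * E θ)) (E θ) := by
        rw [ContinuousLinearMap.sub_apply]
      rw [h1]
      have h2 : ‖(f ((x:ℂ) * E θ) - f ((y:ℂ) * E θ)) (E θ)‖
          ≤ ‖f ((x:ℂ) * E θ) - f ((y:ℂ) * E θ)‖ * ‖E θ‖ := ContinuousLinearMap.le_opNorm _ _
      rw [hEnorm', mul_one] at h2
      have h3 := hlip.dist_le_mul _ (hρV hxcb) _ (hρV hycb)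
      rw [dist_eq_norm, dist_eq_norm] at h3
      have h4 : ‖(x:ℂ) * E θ - (y:ℂ) * E θ‖ = |x - y| := by
        rw [show (x:ℂ) * E θ - (y:ℂ) * E θ = ((x - y : ℝ):ℂ) * E θ by push_cast; ring]
        rw [norm_mul, hEnorm', mul_one, Complex.norm_real, Real.norm_eq_abs]
      rw [h4] at h3
      calc |(f ((x:ℂ) * E θ) - f ((y:ℂ) * E θ)) (E θ)|
          ≤ ‖f ((x:ℂ) * E θ) - f ((y:ℂ) * E θ)‖ := h2
        _ ≤ (K:ℝ) * |x - y| := h3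
    rw [Real.dist_eq, Real.dist_eq]
    have hkey : x * (f ((x:ℂ) * E θ)) (E θ) - y * (f ((y:ℂ) * E θ)) (E θ)
        = (x - y) * (f ((x:ℂ) * E θ)) (E θ)
          + y * ((f ((x:ℂ) * E θ)) (E θ) - (f ((y:ℂ) * E θ)) (E θ)) := by ring
    have hcoe : ((2 * K * Real.toNNReal ρ : NNReal) : ℝ) = 2 * (K:ℝ) * ρ := by
      push_cast
      rw [Real.coe_toNNReal ρ hρ.le]
    rw [hkey, hcoe]
    calc |(x - y) * (f ((x:ℂ) * E θ)) (E θ)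
          + y * ((f ((x:ℂ) * E θ)) (E θ) - (f ((y:ℂ) * E θ)) (E θ))|
        ≤ |(x - y) * (f ((x:ℂ) * E θ)) (E θ)|
          + |y * ((f ((x:ℂ) * E θ)) (E θ) - (f ((y:ℂ) * E θ)) (E θ))| := abs_add_le _ _
      _ = |x - y| * |(f ((x:ℂ) * E θ)) (E θ)|
          + |y| * |(f ((x:ℂ) * E θ)) (E θ) - (f ((y:ℂ) * E θ)) (E θ)| := by
          rw [abs_mul, abs_mul]
      _ ≤ |x - y| * ((K:ℝ) * ρ) + ρ * ((K:ℝ) * |x - y|) := by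
          apply add_le_add
          · exact mul_le_mul_of_nonneg_left hgx (abs_nonneg _)
          · apply mul_le_mul (by rw [abs_of_nonneg hy.1]; exact hy.2) hgdiff (abs_nonneg _) hρ.le
      _ = 2 * (K:ℝ) * ρ * |x - y| := by ring
  -- Lipschitz constant for the angular functions
  have hLang : ∀ s : ℝ, s ∈ Set.Ioo (0:ℝ) ρ → LipschitzOnWith (2 * K * Real.toNNReal ρ * Real.toNNReal ρ)
      (fun θ : ℝ => (f ((s:ℂ) * E θ)) (Complex.I * ((s:ℂ) * E θ)))
      (Set.Icc (-Real.pi) (Real.pi + 1)) := by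
    intro s hs
    rw [lipschitzOnWith_iff_dist_le_mul]
    intro x hx y hy
    have hxcb := hmem x hs.1.le hs.2.le
    have hycb := hmem y hs.1.le hs.2.le
    have hzdist : ‖(s:ℂ) * E x - (s:ℂ) * E y‖ ≤ s * |x - y| := by
      have h1 := (lipschitzWith_circleMap 0 s).dist_le_mul x y
      rw [hcirc, hcirc, dist_eq_norm, Real.dist_eq] at h1
      calc ‖(s:ℂ) * E x - (s:ℂ) * E y‖ ≤ (Real.nnabs s : ℝ) * |x - y| := h1
        _ = s * |x - y| := by rw [Real.coe_nnabs, abs_of_pos hs.1]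
    have hfdist : ‖f ((s:ℂ) * E x) - f ((s:ℂ) * E y)‖ ≤ (K:ℝ) * (s * |x - y|) := by
      have h3 := hlip.dist_le_mul _ (hρV hxcb) _ (hρV hycb)
      rw [dist_eq_norm, dist_eq_norm] at h3
      calc ‖f ((s:ℂ) * E x) - f ((s:ℂ) * E y)‖ ≤ (K:ℝ) * ‖(s:ℂ) * E x - (s:ℂ) * E y‖ := h3
        _ ≤ (K:ℝ) * (s * |x - y|) := mul_le_mul_of_nonneg_left hzdist K.coe_nonneg
    have hkey : (f ((s:ℂ) * E x)) (Complex.I * ((s:ℂ) * E x))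
          - (f ((s:ℂ) * E y)) (Complex.I * ((s:ℂ) * E y))
        = (f ((s:ℂ) * E x) - f ((s:ℂ) * E y)) (Complex.I * ((s:ℂ) * E x))
          + (f ((s:ℂ) * E y)) (Complex.I * ((s:ℂ) * E x) - Complex.I * ((s:ℂ) * E y)) := by
      rw [ContinuousLinearMap.sub_apply, map_sub]
      ring
    rw [Real.dist_eq, Real.dist_eq, hkey]
    have hb1 : |(f ((s:ℂ) * E x) - f ((s:ℂ) * E y)) (Complex.I * ((s:ℂ) * E x))|
        ≤ ((K:ℝ) * (s * |x - y|)) * s := by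
      have h1 : ‖(f ((s:ℂ) * E x) - f ((s:ℂ) * E y)) (Complex.I * ((s:ℂ) * E x))‖
          ≤ ‖f ((s:ℂ) * E x) - f ((s:ℂ) * E y)‖ * ‖Complex.I * ((s:ℂ) * E x)‖ :=
        ContinuousLinearMap.le_opNorm _ _
      have h2 : ‖Complex.I * ((s:ℂ) * E x)‖ = s := by
        rw [norm_mul, Complex.norm_I, one_mul, hznorm x hs.1.le]
      rw [h2] at h1
      calc |(f ((s:ℂ) * E x) - f ((s:ℂ) * E y)) (Complex.I * ((s:ℂ) * E x))|
          ≤ ‖f ((s:ℂ) * E x) - f ((s:ℂ) * E y)‖ * s := h1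
        _ ≤ ((K:ℝ) * (s * |x - y|)) * s :=
            mul_le_mul_of_nonneg_right hfdist hs.1.le
    have hb2 : |(f ((s:ℂ) * E y)) (Complex.I * ((s:ℂ) * E x) - Complex.I * ((s:ℂ) * E y))|
        ≤ ((K:ℝ) * s) * (s * |x - y|) := by
      have h1 : ‖(f ((s:ℂ) * E y)) (Complex.I * ((s:ℂ) * E x) - Complex.I * ((s:ℂ) * E y))‖
          ≤ ‖f ((s:ℂ) * E y)‖ * ‖Complex.I * ((s:ℂ) * E x) - Complex.I * ((s:ℂ) * E y)‖ :=
        ContinuousLinearMap.le_opNorm _ _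
      have h2 : ‖Complex.I * ((s:ℂ) * E x) - Complex.I * ((s:ℂ) * E y)‖ = ‖(s:ℂ) * E x - (s:ℂ) * E y‖ := by
        rw [← mul_sub, norm_mul, Complex.norm_I, one_mul]
      have h3 := hfb _ hycb
      rw [hznorm y hs.1.le] at h3
      calc |(f ((s:ℂ) * E y)) (Complex.I * ((s:ℂ) * E x) - Complex.I * ((s:ℂ) * E y))|
          ≤ ‖f ((s:ℂ) * E y)‖ * ‖Complex.I * ((s:ℂ) * E x) - Complex.I * ((s:ℂ) * E y)‖ := h1
        _ ≤ ((K:ℝ) * s) * (s * |x - y|) := by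
            rw [h2]
            exact mul_le_mul h3 hzdist (norm_nonneg _) (mul_nonneg K.coe_nonneg hs.1.le)
    have hcoe : ((2 * K * Real.toNNReal ρ * Real.toNNReal ρ : NNReal) : ℝ) = 2 * (K:ℝ) * ρ * ρ := by
      push_cast
      rw [Real.coe_toNNReal ρ hρ.le]
    rw [hcoe]
    have hsρ : s ≤ ρ := hs.2.le
    calc |(f ((s:ℂ) * E x) - f ((s:ℂ) * E y)) (Complex.I * ((s:ℂ) * E x))
          + (f ((s:ℂ) * E y)) (Complex.I * ((s:ℂ) * E x) - Complex.I * ((s:ℂ) * E y))|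
        ≤ |(f ((s:ℂ) * E x) - f ((s:ℂ) * E y)) (Complex.I * ((s:ℂ) * E x))|
          + |(f ((s:ℂ) * E y)) (Complex.I * ((s:ℂ) * E x) - Complex.I * ((s:ℂ) * E y))| := abs_add_le _ _
      _ ≤ ((K:ℝ) * (s * |x - y|)) * s + ((K:ℝ) * s) * (s * |x - y|) := add_le_add hb1 hb2
      _ = 2 * (K:ℝ) * (s * s) * |x - y| := by ring
      _ ≤ 2 * (K:ℝ) * ρ * ρ * |x - y| := by
          apply mul_le_mul_of_nonneg_right _ (abs_nonneg _)
          have : s * s ≤ ρ * ρ := by nlinarith [hs.1.le]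
          nlinarith [K.coe_nonneg]
  -- the main identity
  have hmain : ∀ r ∈ Set.Ioo (0:ℝ) ρ,
      (∫ z in ball (0:ℂ) r, Real.log (r / ‖z‖) * Δ z)
        = ∫ θ in Set.Ioo (-Real.pi) Real.pi, φ ((r:ℂ) * E θ) := by
    intro r hr
    have hrρ : r < ρ := hr.2
    set T := Set.Ioo (0:ℝ) r ×ˢ Set.Ioo (-Real.pi) Real.pi with hTdef
    have hTm : MeasurableSet T := measurableSet_Ioo.prod measurableSet_Ioo
    have hTfin : volume T < ⊤ := by
      rw [hTdef, MeasureTheory.Measure.volume_eq_prod, MeasureTheory.Measure.prod_prod,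
        Real.volume_Ioo, Real.volume_Ioo]
      exact ENNReal.mul_lt_top ENNReal.ofReal_lt_top ENNReal.ofReal_lt_top
    have hTtarg : T ⊆ Complex.polarCoord.target := by
      rw [hTdef, Complex.polarCoord_target]
      exact Set.prod_mono Set.Ioo_subset_Ioi_self (le_refl _)
    have hTtargm : MeasurableSet Complex.polarCoord.target := by
      rw [Complex.polarCoord_target]
      exact measurableSet_Ioi.prod measurableSet_Ioo
    have hTsub : ∀ {t : ℝ}, t ≤ r → (Set.Ioo (0:ℝ) t ×ˢ Set.Ioo (-Real.pi) Real.pi)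
        ⊆ Set.Ioo (0:ℝ) ρ ×ˢ Set.Ioo (-Real.pi) Real.pi := by
      intro t htr
      apply Set.prod_mono _ (le_refl _)
      exact Set.Ioo_subset_Ioo (le_refl _) (le_trans htr hrρ.le)
    -- Step 1 : polar coordinates
    have hm1 : (∫ z in ball (0:ℂ) r, Real.log (r / ‖z‖) * Δ z)
        = ∫ p in T, p.1 * (Real.log (r / p.1) * Δ (zp p)) := by
      have hpc := Complex.integral_comp_polarCoord_symm
        ((ball (0:ℂ) r).indicator (fun z => Real.log (r / ‖z‖) * Δ z))
      rw [MeasureTheory.integral_indicator measurableSet_ball] at hpc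
      rw [← hpc]
      have h1 : ∀ p ∈ Complex.polarCoord.target,
          p.1 • (ball (0:ℂ) r).indicator (fun z => Real.log (r / ‖z‖) * Δ z)
            (Complex.polarCoord.symm p)
          = T.indicator (fun p : ℝ × ℝ => p.1 * (Real.log (r / p.1) * Δ (zp p))) p := by
        intro p hp
        rw [Complex.polarCoord_target] at hp
        have hp1 : (0:ℝ) < p.1 := hp.1
        rw [hsymm p]
        have hab : ‖zp p‖ = p.1 := habs2 p hp1.le
        by_cases hlt : p.1 < r
        · have hmem1 : zp p ∈ ball (0:ℂ) r := by
            rw [mem_ball_zero_iff, hab]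
            exact hlt
          have hmemT : p ∈ T := ⟨⟨hp1, hlt⟩, hp.2⟩
          simp only [Set.indicator_of_mem hmem1, Set.indicator_of_mem hmemT]
          rw [smul_eq_mul, hab]
        · have hmem1 : zp p ∉ ball (0:ℂ) r := by
            rw [mem_ball_zero_iff, hab]
            exact hlt
          have hmem2 : p ∉ T := fun hmem' => hlt hmem'.1.2
          simp only [Set.indicator_of_notMem hmem1, Set.indicator_of_notMem hmem2, smul_zero]
      calc (∫ p in Complex.polarCoord.target,
              p.1 • (ball (0:ℂ) r).indicator (fun z => Real.log (r / ‖z‖) * Δ z)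
                (Complex.polarCoord.symm p))
          = ∫ p in Complex.polarCoord.target,
              T.indicator (fun p : ℝ × ℝ => p.1 * (Real.log (r / p.1) * Δ (zp p))) p :=
            MeasureTheory.setIntegral_congr_fun hTtargm (fun p hp => h1 p hp)
        _ = ∫ p in Complex.polarCoord.target ∩ T,
              p.1 * (Real.log (r / p.1) * Δ (zp p)) := MeasureTheory.setIntegral_indicator hTm
        _ = ∫ p in T, p.1 * (Real.log (r / p.1) * Δ (zp p)) := by
            rw [Set.inter_eq_self_of_subset_right hTtarg]
    -- the kernel as an integral of 1/t
    set H : (ℝ × ℝ) → ℝ → ℝ :=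
      fun p t => Set.indicator (Set.Ioi p.1) (fun t' => (1/t') * (p.1 * Δ (zp p))) t with hHdef
    have hm2a : ∀ p ∈ T, p.1 * (Real.log (r / p.1) * Δ (zp p)) = ∫ t in Set.Ioo (0:ℝ) r, H p t := by
      intro p hp
      have hp1 : 0 < p.1 := hp.1.1
      have hpr : p.1 < r := hp.1.2
      have hIoo : Set.Ioo (0:ℝ) r ∩ Set.Ioi p.1 = Set.Ioo p.1 r := by
        ext t
        simp only [Set.mem_inter_iff, Set.mem_Ioo, Set.mem_Ioi]
        constructor
        · rintro ⟨⟨_, h2⟩, h3⟩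
          exact ⟨h3, h2⟩
        · rintro ⟨h1, h2⟩
          exact ⟨⟨lt_trans hp1 h1, h2⟩, h1⟩
      rw [show (fun t => H p t) = H p from rfl,
        show H p = Set.indicator (Set.Ioi p.1) (fun t' => (1/t') * (p.1 * Δ (zp p))) from rfl]
      rw [MeasureTheory.setIntegral_indicator measurableSet_Ioi, hIoo,
        MeasureTheory.integral_mul_const]
      have hlogint : (∫ t in Set.Ioo p.1 r, 1/t) = Real.log (r / p.1) := by
        rw [← MeasureTheory.integral_Ioc_eq_integral_Ioo, ← intervalIntegral.integral_of_le hpr.le]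
        apply integral_one_div
        intro hcon
        rw [Set.uIcc_of_le hpr.le] at hcon
        exact absurd hcon.1 (not_le.2 hp1)
      rw [hlogint]
      ring
    have hΔT : ∀ᵐ p : ℝ × ℝ ∂(volume.restrict T), |Δ (zp p)| ≤ 2*(K:ℝ) := by
      filter_upwards [ae_restrict_of_ae hpolar_good, ae_restrict_mem hTm] with p hgp hpT
      exact hΔabs _ (hgp (hTsub (le_refl r) hpT)).2
    haveI hfinT : IsFiniteMeasure (volume.restrict T) :=
      ⟨by rwa [Measure.restrict_apply_univ]⟩
    haveI hfinIoo : IsFiniteMeasure (volume.restrict (Set.Ioo (0:ℝ) r)) :=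
      ⟨by rw [Measure.restrict_apply_univ, Real.volume_Ioo]; exact ENNReal.ofReal_lt_top⟩
    have hm2 : (∫ p in T, p.1 * (Real.log (r / p.1) * Δ (zp p)))
        = ∫ t in Set.Ioo (0:ℝ) r, (∫ p in T, H p t) := by
      rw [MeasureTheory.setIntegral_congr_fun hTm hm2a]
      apply MeasureTheory.integral_integral_swap
      apply MeasureTheory.Integrable.mono' (g := fun _ => 2*(K:ℝ)) (integrable_const _)
      · have hHm : Measurable (Function.uncurry H) := by
          have heq : Function.uncurry H = fun q : (ℝ × ℝ) × ℝ =>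
              Set.indicator {q : (ℝ × ℝ) × ℝ | q.1.1 < q.2}
                (fun q => (1/q.2) * (q.1.1 * Δ (zp q.1))) q := by
            funext q
            show H q.1 q.2 = _
            by_cases hlt : q.1.1 < q.2
            · rw [show H q.1 q.2 = Set.indicator (Set.Ioi q.1.1)
                  (fun t' => (1/t') * (q.1.1 * Δ (zp q.1))) q.2 from rfl]
              rw [Set.indicator_of_mem (Set.mem_Ioi.2 hlt),
                Set.indicator_of_mem (by exact hlt)]
            · rw [show H q.1 q.2 = Set.indicator (Set.Ioi q.1.1)
                  (fun t' => (1/t') * (q.1.1 * Δ (zp q.1))) q.2 from rfl]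
              rw [Set.indicator_of_notMem (by simpa using hlt),
                Set.indicator_of_notMem (by exact hlt)]
          rw [heq]
          apply Measurable.indicator
          · apply Measurable.mul
            · exact measurable_const.div measurable_snd
            · exact (measurable_fst.fst).mul (hΔzp.comp measurable_fst)
          · exact measurableSet_lt (measurable_fst.fst) measurable_snd
        exact hHm.aestronglyMeasurable
      · have hae1 : ∀ᵐ q : (ℝ×ℝ)×ℝ
            ∂((volume.restrict T).prod (volume.restrict (Set.Ioo (0:ℝ) r))), q.1 ∈ T :=
          ae_fst_prod (ae_restrict_mem hTm)
        have hae2 : ∀ᵐ q : (ℝ×ℝ)×ℝ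
            ∂((volume.restrict T).prod (volume.restrict (Set.Ioo (0:ℝ) r))),
            |Δ (zp q.1)| ≤ 2*(K:ℝ) := ae_fst_prod hΔT
        filter_upwards [hae1, hae2] with q hq1 hq2
        show ‖H q.1 q.2‖ ≤ 2*(K:ℝ)
        rw [Real.norm_eq_abs]
        by_cases hlt : q.1.1 < q.2
        · rw [show H q.1 q.2 = Set.indicator (Set.Ioi q.1.1)
              (fun t' => (1/t') * (q.1.1 * Δ (zp q.1))) q.2 from rfl,
            Set.indicator_of_mem (Set.mem_Ioi.2 hlt)]
          have hs0 : 0 < q.1.1 := hq1.1.1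
          have ht0 : 0 < q.2 := lt_trans hs0 hlt
          have habs' : |(1/q.2) * (q.1.1 * Δ (zp q.1))|
              = (q.1.1/q.2) * |Δ (zp q.1)| := by
            rw [abs_mul, abs_mul, abs_of_pos (one_div_pos.2 ht0), abs_of_pos hs0]
            ring
          rw [habs']
          have hdiv : q.1.1/q.2 ≤ 1 := (div_le_one ht0).2 hlt.le
          calc (q.1.1/q.2) * |Δ (zp q.1)| ≤ 1 * |Δ (zp q.1)| :=
              mul_le_mul_of_nonneg_right hdiv (abs_nonneg _)
            _ = |Δ (zp q.1)| := one_mul _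
            _ ≤ 2*(K:ℝ) := hq2
        · rw [show H q.1 q.2 = Set.indicator (Set.Ioi q.1.1)
              (fun t' => (1/t') * (q.1.1 * Δ (zp q.1))) q.2 from rfl,
            Set.indicator_of_notMem (by simpa using hlt)]
          simpa using mul_nonneg (by norm_num) K.coe_nonneg
    -- inner kernel integral identification
    have hm2b : ∀ t ∈ Set.Ioo (0:ℝ) r, (∫ p in T, H p t)
        = (1/t) * ∫ p in Set.Ioo (0:ℝ) t ×ˢ Set.Ioo (-Real.pi) Real.pi, p.1 * Δ (zp p) := by
      intro t ht
      have hHt : ∀ p ∈ T, H p t = Set.indicator (Prod.fst ⁻¹' (Set.Iio t))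
          (fun p : ℝ × ℝ => (1/t) * (p.1 * Δ (zp p))) p := by
        intro p _
        by_cases hlt : p.1 < t
        · rw [show H p t = Set.indicator (Set.Ioi p.1)
              (fun t' => (1/t') * (p.1 * Δ (zp p))) t from rfl,
            Set.indicator_of_mem (Set.mem_Ioi.2 hlt),
            Set.indicator_of_mem (show p ∈ Prod.fst ⁻¹' (Set.Iio t) from hlt)]
        · rw [show H p t = Set.indicator (Set.Ioi p.1)
              (fun t' => (1/t') * (p.1 * Δ (zp p))) t from rfl,
            Set.indicator_of_notMem (by simpa using hlt),
            Set.indicator_of_notMem (show p ∉ Prod.fst ⁻¹' (Set.Iio t) from hlt)]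
      rw [MeasureTheory.setIntegral_congr_fun hTm hHt,
        MeasureTheory.setIntegral_indicator (measurable_fst measurableSet_Iio)]
      have hseteq : T ∩ (Prod.fst ⁻¹' (Set.Iio t))
          = Set.Ioo (0:ℝ) t ×ˢ Set.Ioo (-Real.pi) Real.pi := by
        ext p
        simp only [hTdef, Set.mem_inter_iff, Set.mem_prod, Set.mem_Ioo, Set.mem_preimage,
          Set.mem_Iio]
        constructor
        · rintro ⟨⟨⟨h1, h2⟩, h3⟩, h4⟩
          exact ⟨⟨h1, h4⟩, h3⟩
        · rintro ⟨⟨h1, h4⟩, h3⟩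
          exact ⟨⟨⟨h1, lt_trans h4 ht.2⟩, h3⟩, h4⟩
      rw [hseteq, MeasureTheory.integral_const_mul]
    -- the core divergence computation
    have hm3 : ∀ t ∈ Set.Ioo (0:ℝ) r,
        (∫ p in Set.Ioo (0:ℝ) t ×ˢ Set.Ioo (-Real.pi) Real.pi, p.1 * Δ (zp p))
          = t * ∫ θ in Set.Ioo (-Real.pi) Real.pi, (f ((t:ℂ) * E θ)) (E θ) := by
      intro t ht
      have htρ : t < ρ := lt_trans ht.2 hrρ
      set St := Set.Ioo (0:ℝ) t ×ˢ Set.Ioo (-Real.pi) Real.pi with hStdef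
      have hStm : MeasurableSet St := measurableSet_Ioo.prod measurableSet_Ioo
      have hStfin : volume St < ⊤ := by
        rw [hStdef, MeasureTheory.Measure.volume_eq_prod, MeasureTheory.Measure.prod_prod,
          Real.volume_Ioo, Real.volume_Ioo]
        exact ENNReal.mul_lt_top ENNReal.ofReal_lt_top ENNReal.ofReal_lt_top
      haveI : IsFiniteMeasure (volume.restrict St) := ⟨by rwa [Measure.restrict_apply_univ]⟩
      set Du : ℝ × ℝ → ℝ := fun p =>
        (f (zp p)) (E p.2) + p.1 * ((fderiv ℝ f (zp p)) (E p.2) (E p.2)) with hDudef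
      set Dw : ℝ × ℝ → ℝ := fun p =>
        (fderiv ℝ f (zp p)) (zp p * Complex.I) (Complex.I * zp p)
          + (f (zp p)) (Complex.I * (zp p * Complex.I)) with hDwdef
      have hStsub : St ⊆ Set.Ioo (0:ℝ) ρ ×ˢ Set.Ioo (-Real.pi) Real.pi := hTsub ht.2.le
      -- pointwise algebraic splitting
      have hsplit : ∀ p ∈ St, p.1 * Δ (zp p) = Du p + (1/p.1) * Dw p := by
        intro p hp
        rw [hΔeq]
        exact polar_split (fderiv ℝ f (zp p)) (f (zp p)) hp.1.1 p.2
      -- bounds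
      have hDubd : ∀ᵐ p : ℝ × ℝ, p ∈ St → |Du p| ≤ 2*(K:ℝ)*ρ := by
        filter_upwards [hpolar_good] with p hgp hpSt
        obtain ⟨hd, hA⟩ := hgp (hStsub hpSt)
        have hp1 : 0 < p.1 := hpSt.1.1
        have hpρ : p.1 ≤ ρ := le_trans hpSt.1.2.le (le_trans ht.2.le hrρ.le)
        have hzcb : zp p ∈ closedBall (0:ℂ) ρ := by
          rw [mem_closedBall_zero_iff, habs2 p hp1.le]
          exact hpρ
        have h1 : |(f (zp p)) (E p.2)| ≤ (K:ℝ) * p.1 := by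
          have ho := ContinuousLinearMap.le_opNorm (f (zp p)) (E p.2)
          rw [hEnorm', mul_one] at ho
          have h2 := hfb (zp p) hzcb
          rw [habs2 p hp1.le] at h2
          calc |(f (zp p)) (E p.2)| = ‖(f (zp p)) (E p.2)‖ := (Real.norm_eq_abs _).symm
            _ ≤ ‖f (zp p)‖ := ho
            _ ≤ (K:ℝ) * p.1 := h2
        have h2 : |(fderiv ℝ f (zp p)) (E p.2) (E p.2)| ≤ (K:ℝ) := by
          have ha := ContinuousLinearMap.le_opNorm ((fderiv ℝ f (zp p)) (E p.2)) (E p.2)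
          have hb := ContinuousLinearMap.le_opNorm (fderiv ℝ f (zp p)) (E p.2)
          rw [hEnorm', mul_one] at ha hb
          calc |(fderiv ℝ f (zp p)) (E p.2) (E p.2)|
              = ‖(fderiv ℝ f (zp p)) (E p.2) (E p.2)‖ := (Real.norm_eq_abs _).symm
            _ ≤ ‖(fderiv ℝ f (zp p)) (E p.2)‖ := ha
            _ ≤ ‖fderiv ℝ f (zp p)‖ := hb
            _ ≤ (K:ℝ) := hA
        calc |Du p| ≤ |(f (zp p)) (E p.2)|
              + |p.1 * ((fderiv ℝ f (zp p)) (E p.2) (E p.2))| := abs_add_le _ _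
          _ = |(f (zp p)) (E p.2)| + p.1 * |(fderiv ℝ f (zp p)) (E p.2) (E p.2)| := by
              rw [abs_mul, abs_of_pos hp1]
          _ ≤ (K:ℝ) * p.1 + p.1 * (K:ℝ) := add_le_add h1 (mul_le_mul_of_nonneg_left h2 hp1.le)
          _ ≤ 2*(K:ℝ)*ρ := by nlinarith [K.coe_nonneg]
      have hDwbd : ∀ᵐ p : ℝ × ℝ, p ∈ St → |(1/p.1) * Dw p| ≤ 2*(K:ℝ)*ρ := by
        filter_upwards [hpolar_good] with p hgp hpSt
        obtain ⟨hd, hA⟩ := hgp (hStsub hpSt)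
        have hp1 : 0 < p.1 := hpSt.1.1
        have hpρ : p.1 ≤ ρ := le_trans hpSt.1.2.le (le_trans ht.2.le hrρ.le)
        have hzn : ‖zp p‖ = p.1 := by rw [habs2 p hp1.le]
        have hzcb : zp p ∈ closedBall (0:ℂ) ρ := by
          rw [mem_closedBall_zero_iff, hzn]
          exact hpρ
        have hn1 : ‖zp p * Complex.I‖ = p.1 := by rw [norm_mul, Complex.norm_I, mul_one, hzn]
        have hn2 : ‖Complex.I * zp p‖ = p.1 := by rw [norm_mul, Complex.norm_I, one_mul, hzn]
        have hn3 : ‖Complex.I * (zp p * Complex.I)‖ = p.1 := by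
          rw [norm_mul, Complex.norm_I, one_mul, hn1]
        have h1 : |(fderiv ℝ f (zp p)) (zp p * Complex.I) (Complex.I * zp p)|
            ≤ (K:ℝ) * p.1 * p.1 := by
          have ha := ContinuousLinearMap.le_opNorm
            ((fderiv ℝ f (zp p)) (zp p * Complex.I)) (Complex.I * zp p)
          have hb := ContinuousLinearMap.le_opNorm (fderiv ℝ f (zp p)) (zp p * Complex.I)
          rw [hn2] at ha
          rw [hn1] at hb
          calc |(fderiv ℝ f (zp p)) (zp p * Complex.I) (Complex.I * zp p)|
              = ‖(fderiv ℝ f (zp p)) (zp p * Complex.I) (Complex.I * zp p)‖ :=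
                (Real.norm_eq_abs _).symm
            _ ≤ ‖(fderiv ℝ f (zp p)) (zp p * Complex.I)‖ * p.1 := ha
            _ ≤ (‖fderiv ℝ f (zp p)‖ * p.1) * p.1 :=
                mul_le_mul_of_nonneg_right hb hp1.le
            _ ≤ ((K:ℝ) * p.1) * p.1 :=
                mul_le_mul_of_nonneg_right (mul_le_mul_of_nonneg_right hA hp1.le) hp1.le
            _ = (K:ℝ) * p.1 * p.1 := by ring
        have h2 : |(f (zp p)) (Complex.I * (zp p * Complex.I))| ≤ (K:ℝ) * p.1 * p.1 := by
          have ha := ContinuousLinearMap.le_opNorm (f (zp p)) (Complex.I * (zp p * Complex.I))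
          rw [hn3] at ha
          have h3 := hfb (zp p) hzcb
          rw [hzn] at h3
          calc |(f (zp p)) (Complex.I * (zp p * Complex.I))|
              = ‖(f (zp p)) (Complex.I * (zp p * Complex.I))‖ := (Real.norm_eq_abs _).symm
            _ ≤ ‖f (zp p)‖ * p.1 := ha
            _ ≤ ((K:ℝ) * p.1) * p.1 := mul_le_mul_of_nonneg_right h3 hp1.le
            _ = (K:ℝ) * p.1 * p.1 := by ring
        have hDw2 : |Dw p| ≤ 2 * ((K:ℝ) * p.1 * p.1) := by
          calc |Dw p| ≤ |(fderiv ℝ f (zp p)) (zp p * Complex.I) (Complex.I * zp p)|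
                + |(f (zp p)) (Complex.I * (zp p * Complex.I))| := abs_add_le _ _
            _ ≤ 2 * ((K:ℝ) * p.1 * p.1) := by linarith
        calc |(1/p.1) * Dw p| = (1/p.1) * |Dw p| := by
              rw [abs_mul, abs_of_pos (one_div_pos.2 hp1)]
          _ ≤ (1/p.1) * (2 * ((K:ℝ) * p.1 * p.1)) :=
              mul_le_mul_of_nonneg_left hDw2 (one_div_pos.2 hp1).le
          _ = 2 * (K:ℝ) * p.1 := by
              field_simp
          _ ≤ 2*(K:ℝ)*ρ := by nlinarith [K.coe_nonneg]
      -- integrability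
      have hDui : IntegrableOn Du St :=
        integrableOn_of_bound hStm hStfin hDum.aestronglyMeasurable hDubd
      have hDwi : IntegrableOn (fun p : ℝ × ℝ => (1/p.1) * Dw p) St :=
        integrableOn_of_bound hStm hStfin
          ((measurable_const.div measurable_fst).mul hDwm).aestronglyMeasurable hDwbd
      -- split the integral
      have hsum : (∫ p in St, p.1 * Δ (zp p))
          = (∫ p in St, Du p) + ∫ p in St, (1/p.1) * Dw p :=
        (MeasureTheory.setIntegral_congr_fun hStm (fun p hp => hsplit p hp)).trans
          (MeasureTheory.integral_add hDui hDwi)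
      have hprodSt : (volume.restrict (Set.Ioo (0:ℝ) t)).prod
            (volume.restrict (Set.Ioo (-Real.pi) Real.pi))
          = (volume : Measure (ℝ×ℝ)).restrict St := by
        rw [MeasureTheory.Measure.prod_restrict, ← MeasureTheory.Measure.volume_eq_prod]
      have hDui2 : Integrable Du ((volume.restrict (Set.Ioo (0:ℝ) t)).prod
          (volume.restrict (Set.Ioo (-Real.pi) Real.pi))) := by
        rw [hprodSt]
        exact hDui
      have hDwi2 : Integrable (fun p : ℝ × ℝ => (1/p.1) * Dw p)
          ((volume.restrict (Set.Ioo (0:ℝ) t)).prod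
            (volume.restrict (Set.Ioo (-Real.pi) Real.pi))) := by
        rw [hprodSt]
        exact hDwi
      -- the Du part
      have hDuval : (∫ p in St, Du p)
          = t * ∫ θ in Set.Ioo (-Real.pi) Real.pi, (f ((t:ℂ) * E θ)) (E θ) := by
        rw [← hprodSt, MeasureTheory.integral_prod_symm _ hDui2]
        have hinner : ∀ᵐ θ ∂(volume.restrict (Set.Ioo (-Real.pi) Real.pi)),
            (∫ σ in Set.Ioo (0:ℝ) t, Du (σ, θ)) = t * ((f ((t:ℂ) * E θ)) (E θ)) := by
          filter_upwards [ae_restrict_of_ae hslice_θ, ae_restrict_mem measurableSet_Ioo]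
            with θ hθ hθmem
          have hud : ∀ᵐ σ : ℝ, σ ∈ Set.Ioo (0:ℝ) t →
              HasDerivAt (fun σ : ℝ => σ * (f ((σ:ℂ) * E θ)) (E θ)) (Du (σ, θ)) σ := by
            filter_upwards [hθ] with σ hσ hσmem
            have hg := hσ ⟨⟨hσmem.1, lt_trans hσmem.2 htρ⟩, hθmem⟩
            exact hasDerivAt_radial f θ hg.1.hasFDerivAt
          have hftc2 := lipschitzOnWith_ftc (a := 0) (b := t) (b' := ρ)
            ht.1.le htρ (hLrad θ) hud
          simpa using hftc2
        rw [MeasureTheory.integral_congr_ae hinner, MeasureTheory.integral_const_mul]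
      -- the Dw part vanishes
      have hDwval : (∫ p in St, (1/p.1) * Dw p) = 0 := by
        rw [← hprodSt, MeasureTheory.integral_prod _ hDwi2]
        have houter : ∀ᵐ σ ∂(volume.restrict (Set.Ioo (0:ℝ) t)),
            (∫ θ in Set.Ioo (-Real.pi) Real.pi, (1/σ) * Dw (σ, θ)) = 0 := by
          filter_upwards [ae_restrict_of_ae hslice_s, ae_restrict_mem measurableSet_Ioo]
            with σ hσ hσmem
          rw [MeasureTheory.integral_const_mul]
          have hσρ : σ ∈ Set.Ioo (0:ℝ) ρ := ⟨hσmem.1, lt_trans hσmem.2 htρ⟩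
          have hwd : ∀ᵐ θ : ℝ, θ ∈ Set.Ioo (-Real.pi) Real.pi →
              HasDerivAt (fun θ : ℝ => (f ((σ:ℂ) * E θ)) (Complex.I * ((σ:ℂ) * E θ)))
                (Dw (σ, θ)) θ := by
            filter_upwards [hσ] with θ hθ hθmem
            have hg := hθ ⟨hσρ, hθmem⟩
            exact hasDerivAt_angular f hg.1.hasFDerivAt
          have hftc3 := lipschitzOnWith_ftc (a := -Real.pi) (b := Real.pi) (b' := Real.pi + 1)
            (by linarith [Real.pi_pos]) (by linarith) (hLang σ hσρ) hwd
          rw [hftc3]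
          have hweq : (f ((σ:ℂ) * E Real.pi)) (Complex.I * ((σ:ℂ) * E Real.pi))
              = (f ((σ:ℂ) * E (-Real.pi))) (Complex.I * ((σ:ℂ) * E (-Real.pi))) := by
            rw [hEπ]
          show (1/σ) * ((f ((σ:ℂ) * E Real.pi)) (Complex.I * ((σ:ℂ) * E Real.pi))
              - (f ((σ:ℂ) * E (-Real.pi))) (Complex.I * ((σ:ℂ) * E (-Real.pi)))) = 0
          rw [hweq, sub_self, mul_zero]
        rw [MeasureTheory.integral_congr_ae houter, MeasureTheory.integral_zero]
      rw [hsum, hDuval, hDwval, add_zero]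
    -- FTC along rays
    have hm4 : ∀ θ : ℝ, (∫ t in Set.Ioo (0:ℝ) r, (f ((t:ℂ) * E θ)) (E θ)) = φ ((r:ℂ) * E θ) := by
      intro θ
      have hψ : ∀ t ∈ Set.uIcc (0:ℝ) r,
          HasDerivAt (fun t : ℝ => φ ((t:ℂ) * E θ)) ((f ((t:ℂ) * E θ)) (E θ)) t := by
        intro t ht
        rw [Set.uIcc_of_le hr.1.le] at ht
        have h1 : HasDerivAt (fun t : ℝ => (t:ℂ) * E θ) (E θ) t := by
          simpa [Complex.real_smul] using (hasDerivAt_id t).smul_const (E θ)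
        exact HasFDerivAt.comp_hasDerivAt _
          (hder _ (hmemV θ ht.1 (le_trans ht.2 hrρ.le))) h1
      have hcont2 : ContinuousOn (fun t : ℝ => (f ((t:ℂ) * E θ)) (E θ)) (Set.Icc 0 r) := by
        have h2 : ContinuousOn (fun t : ℝ => (f ((t:ℂ) * E θ), E θ)) (Set.Icc 0 r) := by
          apply ContinuousOn.prodMk _ continuousOn_const
          apply hlip.continuousOn.comp
            ((Complex.continuous_ofReal.mul continuous_const).continuousOn)
          intro t ht
          exact hmemV θ ht.1 (le_trans ht.2 hrρ.le)
        exact hev1.comp_continuousOn h2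
      have hInt2 : IntervalIntegrable (fun t : ℝ => (f ((t:ℂ) * E θ)) (E θ)) volume 0 r := by
        apply ContinuousOn.intervalIntegrable
        rwa [Set.uIcc_of_le hr.1.le]
      have hftc := intervalIntegral.integral_eq_sub_of_hasDerivAt hψ hInt2
      rw [← MeasureTheory.integral_Ioc_eq_integral_Ioo,
        ← intervalIntegral.integral_of_le hr.1.le, hftc]
      simp [hφ0]
    rw [hm1, hm2]
    have hstep : ∀ t ∈ Set.Ioo (0:ℝ) r, (∫ p in T, H p t)
        = ∫ θ in Set.Ioo (-Real.pi) Real.pi, (f ((t:ℂ) * E θ)) (E θ) := by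
      intro t ht
      rw [hm2b t ht, hm3 t ht, ← mul_assoc, one_div, inv_mul_cancel₀ ht.1.ne', one_mul]
    rw [MeasureTheory.setIntegral_congr_fun measurableSet_Ioo hstep]
    have hswap : (∫ t in Set.Ioo (0:ℝ) r, ∫ θ in Set.Ioo (-Real.pi) Real.pi,
          (f ((t:ℂ) * E θ)) (E θ))
        = ∫ θ in Set.Ioo (-Real.pi) Real.pi, ∫ t in Set.Ioo (0:ℝ) r, (f ((t:ℂ) * E θ)) (E θ) :=
      MeasureTheory.integral_integral_swap (by
        apply MeasureTheory.Integrable.mono' (g := fun _ => (K:ℝ)*ρ) (integrable_const _)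
        · exact hfE.aestronglyMeasurable
        · have hae1 : ∀ᵐ q : ℝ×ℝ
              ∂((volume.restrict (Set.Ioo (0:ℝ) r)).prod
                (volume.restrict (Set.Ioo (-Real.pi) Real.pi))), q.1 ∈ Set.Ioo (0:ℝ) r :=
            ae_fst_prod (ae_restrict_mem measurableSet_Ioo)
          filter_upwards [hae1] with q hq1
          show ‖(f ((q.1:ℂ) * E q.2)) (E q.2)‖ ≤ (K:ℝ)*ρ
          have h1 : ‖(f ((q.1:ℂ) * E q.2)) (E q.2)‖ ≤ ‖f ((q.1:ℂ) * E q.2)‖ * ‖E q.2‖ :=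
            ContinuousLinearMap.le_opNorm _ _
          rw [hEnorm', mul_one] at h1
          have h2 := hfb _ (hmem q.2 hq1.1.le (le_trans hq1.2.le hrρ.le))
          rw [hznorm q.2 hq1.1.le] at h2
          have h3 : (K:ℝ) * q.1 ≤ (K:ℝ) * ρ :=
            mul_le_mul_of_nonneg_left (le_trans hq1.2.le hrρ.le) K.coe_nonneg
          exact le_trans h1 (le_trans h2 h3))
    rw [hswap]
    apply MeasureTheory.setIntegral_congr_fun measurableSet_Ioo
    intro θ _
    exact hm4 θ
  -- bounds on the circular integral
  have hIbd : ∀ r ∈ Set.Ioo (0:ℝ) ρ,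
      2 * Real.pi * (c * r^2) ≤ (∫ z in ball (0:ℂ) r, Real.log (r / ‖z‖) * Δ z) ∧
      (∫ z in ball (0:ℂ) r, Real.log (r / ‖z‖) * Δ z) ≤ 2 * Real.pi * (K/2 * r^2) := by
    intro r hr
    rw [hmain r hr]
    have hnorm_r : ∀ θ : ℝ, ‖(r:ℂ) * E θ‖ = r := by
      intro θ
      rw [habs θ hr.1.le]
    have hcb : ∀ θ : ℝ, (r:ℂ) * E θ ∈ closedBall (0:ℂ) ρ := fun θ => hmem θ hr.1.le hr.2.le
    have hcont : Continuous fun θ : ℝ => φ ((r:ℂ) * E θ) := by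
      apply ContinuousOn.comp_continuous hdiff.continuousOn
        (continuous_const.mul hEc)
      exact fun θ => hρV (hcb θ)
    have hfin : volume (Set.Ioo (-Real.pi) Real.pi) < ⊤ := by
      rw [Real.volume_Ioo]; exact ENNReal.ofReal_lt_top
    have hint : IntegrableOn (fun θ : ℝ => φ ((r:ℂ) * E θ)) (Set.Ioo (-Real.pi) Real.pi) := by
      apply integrableOn_of_bound measurableSet_Ioo hfin hcont.aestronglyMeasurable
        (C := (K:ℝ)/2 * r^2)
      apply Filter.Eventually.of_forall
      intro θ _
      have hup := hupper _ (hcb θ)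
      have hlo := hlower _ (hcb θ)
      rw [hnorm_r] at hup hlo
      rw [abs_of_nonneg (le_trans (by positivity) hlo)]
      exact hup
    have h2π : (volume (Set.Ioo (-Real.pi) Real.pi)).toReal = 2 * Real.pi := by
      rw [Real.volume_Ioo, ENNReal.toReal_ofReal (by linarith [Real.pi_pos])]
      ring
    constructor
    · have hle := MeasureTheory.setIntegral_mono_on
        (integrableOn_const (C := c * r^2) hfin.ne) hint measurableSet_Ioo
        (fun θ _ => by
          have hlo := hlower _ (hcb θ)
          rwa [hnorm_r] at hlo)
      calc 2 * Real.pi * (c * r^2)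
          = (volume (Set.Ioo (-Real.pi) Real.pi)).toReal • (c * r^2) := by
            rw [h2π, smul_eq_mul]
        _ = ∫ _ in Set.Ioo (-Real.pi) Real.pi, (c * r^2) := (MeasureTheory.setIntegral_const _).symm
        _ ≤ _ := hle
    · have hle := MeasureTheory.setIntegral_mono_on
        hint (integrableOn_const (C := (K:ℝ)/2 * r^2) hfin.ne) measurableSet_Ioo
        (fun θ _ => by
          have hup := hupper _ (hcb θ)
          rwa [hnorm_r] at hup)
      calc (∫ θ in Set.Ioo (-Real.pi) Real.pi, φ ((r:ℂ) * E θ))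
          ≤ ∫ _ in Set.Ioo (-Real.pi) Real.pi, ((K:ℝ)/2 * r^2) := hle
        _ = (volume (Set.Ioo (-Real.pi) Real.pi)).toReal • ((K:ℝ)/2 * r^2) :=
            MeasureTheory.setIntegral_const _
        _ = 2 * Real.pi * ((K:ℝ)/2 * r^2) := by rw [h2π, smul_eq_mul]
  have hF : ∀ r ∈ Set.Ioo (0:ℝ) ρ,
      c ≤ (2 / (Real.pi * r ^ 2)) * ∫ z in ball (0:ℂ) r, Real.log (r / ‖z‖) * Δ z ∧
      (2 / (Real.pi * r ^ 2)) * (∫ z in ball (0:ℂ) r, Real.log (r / ‖z‖) * Δ z)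
        ≤ 2 * K := by
    intro r hr
    obtain ⟨h1, h2⟩ := hIbd r hr
    have hpos : (0:ℝ) < Real.pi * r^2 := by
      have := Real.pi_pos
      have := hr.1
      positivity
    have hc2 : (0:ℝ) < 2 / (Real.pi * r^2) := by positivity
    constructor
    · have hmul := mul_le_mul_of_nonneg_left h1 hc2.le
      have heq : 2/(Real.pi*r^2) * (2*Real.pi*(c*r^2)) = 4*c := by
        rw [div_mul_eq_mul_div,
          show (2:ℝ)*(2*Real.pi*(c*r^2)) = (4*c)*(Real.pi*r^2) from by ring,
          mul_div_cancel_right₀ _ hpos.ne']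
      rw [heq] at hmul
      linarith
    · have hmul := mul_le_mul_of_nonneg_left h2 hc2.le
      have heq : 2/(Real.pi*r^2) * (2*Real.pi*((K:ℝ)/2*r^2)) = 2*(K:ℝ) := by
        rw [div_mul_eq_mul_div,
          show (2:ℝ)*(2*Real.pi*((K:ℝ)/2*r^2)) = (2*(K:ℝ))*(Real.pi*r^2) from by ring,
          mul_div_cancel_right₀ _ hpos.ne']
      rw [heq] at hmul
      exact hmul
  constructor
  · -- first conjunct
    intro H
    set r := ρ/2 with hrdef
    have hrIoo : r ∈ Set.Ioo (0:ℝ) ρ := ⟨by positivity, by linarith⟩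
    have hlow := (hIbd r hrIoo).1
    have hneg : (∫ z in ball (0:ℂ) r, Real.log (r / ‖z‖) * Δ z) ≤ 0 := by
      apply MeasureTheory.integral_nonpos_of_ae
      rw [Filter.EventuallyLE, ae_restrict_iff' measurableSet_ball]
      filter_upwards [H] with z hz hzb
      have hzV : z ∈ V :=
        hρV ((closedBall_subset_closedBall hrIoo.2.le) (ball_subset_closedBall hzb))
      have hΔz : Δ z ≤ 0 := hz hzV
      rcases eq_or_ne z 0 with h0 | h0
      · simp [h0]
      · have habs0 : 0 < ‖z‖ := norm_pos_iff.mpr h0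
        have hlog : 0 ≤ Real.log (r / ‖z‖) := by
          apply Real.log_nonneg
          rw [le_div_iff₀ habs0, one_mul]
          have := mem_ball_zero_iff.1 hzb
          exact this.le
        exact mul_nonpos_iff.2 (Or.inl ⟨hlog, hΔz⟩)
    have hposI : (0:ℝ) < 2 * Real.pi * (c * r^2) := by
      have := Real.pi_pos
      have := hrIoo.1
      positivity
    linarith
  · -- second conjunct
    have hev : ∀ᶠ r in nhdsWithin (0:ℝ) (Set.Ioi 0), r ∈ Set.Ioo (0:ℝ) ρ :=
      Ioo_mem_nhdsGT_of_mem (by constructor <;> [exact le_refl 0; exact hρ])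
    refine Filter.le_limsup_of_frequently_le ?_ ?_
    · apply Filter.Eventually.frequently
      filter_upwards [hev] with r hr
      exact (hF r hr).1
    · apply Filter.isBoundedUnder_of_eventually_le (a := 2 * (K:ℝ))
      filter_upwards [hev] with r hr
      exact (hF r hr).2
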